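/- arXiv:2302.02144 — 2 statements merged into one kernel-verified Lean document; each statement's English description precedes it below -/
import Mathlib

section
/- Let a, b > 0 and θ_i = c^(i+1)K^(i²) with c > 0 and K² > (a+b)²/(4ab). Then for all u, v ≥ 0 and all real ξ, η, the expression Σ_{i=0}^{p-2} C(p-2,i) u^i v^{p-2-i} (a θ_{i+2} ξ² + (a+b) θ_{i+1} ξη + b θ_i η²) is nonnegative. -/
theorem stmt10 (p : ℕ) (hp : 2 ≤ p) (a b c K : ℝ) (ha : 0 < a) (hb : 0 < b)
    (hc : 0 < c) (hK : 0 < K) (hK2 : K ^ 2 > (a + b) ^ 2 / (4 * a * b))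
    (θ : ℕ → ℝ) (hθ : ∀ i, θ i = c ^ (i + 1) * K ^ (i ^ 2)) :
    ∀ u v : ℝ, 0 ≤ u → 0 ≤ v → ∀ ξ η : ℝ,
      0 ≤ ∑ i ∈ Finset.range (p - 1),
        ((p - 2).choose i : ℝ) * u ^ i * v ^ (p - 2 - i) *
          (a * θ (i + 2) * ξ ^ 2 + (a + b) * θ (i + 1) * ξ * η + b * θ i * η ^ 2) := by
  intro u v hu hv ξ η
  have hθpos : ∀ j, 0 < θ j := fun j => by rw [hθ]; positivity
  have key : (a + b) ^ 2 ≤ 4 * a * b * K ^ 2 := by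
    rw [gt_iff_lt, div_lt_iff₀ (by positivity)] at hK2
    nlinarith
  apply Finset.sum_nonneg
  intro i _
  have hrel : θ (i + 2) * θ i = K ^ 2 * θ (i + 1) ^ 2 := by
    calc θ (i + 2) * θ i = c ^ (i + 3) * K ^ ((i + 2) ^ 2) * (c ^ (i + 1) * K ^ (i ^ 2)) := by
          rw [hθ, hθ]
      _ = c ^ ((i + 3) + (i + 1)) * K ^ ((i + 2) ^ 2 + i ^ 2) := by
          rw [pow_add, pow_add]; ring
      _ = c ^ ((i + 2) * 2) * K ^ (2 + (i + 1) ^ 2 * 2) := by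
          congr 1 <;> [skip; congr 1] <;> ring_nf
      _ = K ^ 2 * θ (i + 1) ^ 2 := by rw [hθ]; ring
  have hdisc : (a + b) ^ 2 * θ (i + 1) ^ 2 ≤ 4 * a * b * (θ (i + 2) * θ i) := by
    rw [hrel]
    nlinarith [mul_le_mul_of_nonneg_right key (sq_nonneg (θ (i + 1)))]
  have hquad : 0 ≤ a * θ (i + 2) * ξ ^ 2 + (a + b) * θ (i + 1) * ξ * η + b * θ i * η ^ 2 := by
    nlinarith [sq_nonneg (2 * a * θ (i + 2) * ξ + (a + b) * θ (i + 1) * η),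
      mul_pos ha (hθpos (i + 2)),
      mul_nonneg (sub_nonneg.2 hdisc) (sq_nonneg η)]
  exact mul_nonneg (mul_nonneg (mul_nonneg (Nat.cast_nonneg _) (pow_nonneg hu i))
    (pow_nonneg hv _)) hquad
end

section
/- For p ≥ 2 and the sequence θ_i = c^(i+1)K^(i²) (c, K > 0), the Hessian matrix of H_p(u,v) = Σ_{i=0}^p C(p,i)θ_i u^i v^{p-i} at any point (u,v) with u, v ≥ 0 is positive semidefinite whenever K ≥ 1. In particular H_p is convex on the nonnegative quadrant. -/
open Finset

noncomputable def tA (p : ℕ) (θ : ℕ → ℝ) (u v : ℝ) (i : ℕ) : ℝ :=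
  ((p.choose i : ℝ) * θ i * (i:ℝ)) * (((i-1 : ℕ):ℝ) * u ^ (i-1-1)) * v ^ (p-i)
noncomputable def tB (p : ℕ) (θ : ℕ → ℝ) (u v : ℝ) (i : ℕ) : ℝ :=
  ((p.choose i : ℝ) * θ i * (i:ℝ) * u ^ (i-1)) * (((p-i : ℕ):ℝ) * v ^ (p-i-1))
noncomputable def tD (p : ℕ) (θ : ℕ → ℝ) (u v : ℝ) (i : ℕ) : ℝ :=
  ((p.choose i : ℝ) * θ i * u ^ i * ((p-i : ℕ):ℝ)) * (((p-i-1 : ℕ):ℝ) * v ^ (p-i-1-1))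

lemma L1 (n : ℕ) (f g : ℕ → ℝ) (e : ℕ → ℕ) (u : ℝ) :
    HasDerivAt (fun x : ℝ => ∑ i ∈ range n, f i * x ^ e i * g i)
      (∑ i ∈ range n, f i * ((e i : ℝ) * u ^ (e i - 1)) * g i) u := by
  apply HasDerivAt.fun_sum
  intro i _
  exact ((hasDerivAt_pow (e i) u).const_mul (f i)).mul_const (g i)

lemma L2 (n : ℕ) (f : ℕ → ℝ) (e : ℕ → ℕ) (u : ℝ) :
    HasDerivAt (fun x : ℝ => ∑ i ∈ range n, f i * x ^ e i)
      (∑ i ∈ range n, f i * ((e i : ℝ) * u ^ (e i - 1))) u := by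
  apply HasDerivAt.fun_sum
  intro i _
  exact (hasDerivAt_pow (e i) u).const_mul (f i)

lemma quad_nonneg {A B D : ℝ} (hA : 0 ≤ A) (hD : 0 ≤ D) (hB : B^2 ≤ A*D) (x y : ℝ) :
    0 ≤ A*x^2 + 2*B*x*y + D*y^2 := by
  rcases eq_or_lt_of_le hA with h | h
  · have hB0 : B = 0 := by nlinarith [sq_nonneg B]
    subst hB0
    nlinarith [mul_nonneg hD (sq_nonneg y), sq_nonneg x]
  · nlinarith [sq_nonneg (A*x + B*y), mul_nonneg (sub_nonneg.2 hB) (sq_nonneg y)]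

lemma psd_2x2 {A B D : ℝ} (hA : 0 ≤ A) (hD : 0 ≤ D) (hB : B^2 ≤ A*D) :
    Matrix.PosSemidef !![A,B;B,D] := by
  rw [Matrix.posSemidef_iff_dotProduct_mulVec]
  constructor
  · ext i j
    fin_cases i <;> fin_cases j <;> simp [Matrix.conjTranspose_apply]
  · intro x
    have h := quad_nonneg hA hD hB (x 0) (x 1)
    simp only [dotProduct, Matrix.mulVec, Fin.sum_univ_two, Matrix.cons_val_zero,
      Matrix.cons_val_one, Matrix.head_cons, Matrix.cons_mulVec, Matrix.cons_dotProduct,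
      star_trivial, Matrix.of_apply, Matrix.cons_val', Matrix.empty_val',
      Matrix.cons_val_fin_one, Matrix.head_fin_const]
    nlinarith [h]

section main

variable {p : ℕ} {c K : ℝ} {θ : ℕ → ℝ} {u v : ℝ}

lemma θ_nonneg (hc : 0 < c) (hK : 1 ≤ K) (hθ : ∀ i, θ i = c ^ (i + 1) * K ^ (i ^ 2)) (i : ℕ) :
    0 ≤ θ i := by
  rw [hθ]; have : (0:ℝ) < K := lt_of_lt_of_le one_pos hK; positivity

lemma tA_nonneg (hc : 0 < c) (hK : 1 ≤ K) (hθ : ∀ i, θ i = c ^ (i + 1) * K ^ (i ^ 2))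
    (hu : 0 ≤ u) (hv : 0 ≤ v) (i : ℕ) : 0 ≤ tA p θ u v i := by
  have := θ_nonneg hc hK hθ i; unfold tA; positivity

lemma tB_nonneg (hc : 0 < c) (hK : 1 ≤ K) (hθ : ∀ i, θ i = c ^ (i + 1) * K ^ (i ^ 2))
    (hu : 0 ≤ u) (hv : 0 ≤ v) (i : ℕ) : 0 ≤ tB p θ u v i := by
  have := θ_nonneg hc hK hθ i; unfold tB; positivity

lemma tD_nonneg (hc : 0 < c) (hK : 1 ≤ K) (hθ : ∀ i, θ i = c ^ (i + 1) * K ^ (i ^ 2))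
    (hu : 0 ≤ u) (hv : 0 ≤ v) (i : ℕ) : 0 ≤ tD p θ u v i := by
  have := θ_nonneg hc hK hθ i; unfold tD; positivity

lemma term_ineq (hc : 0 < c) (hK : 1 ≤ K) (hθ : ∀ i, θ i = c ^ (i + 1) * K ^ (i ^ 2))
    (hu : 0 ≤ u) (hv : 0 ≤ v) {j : ℕ} (hj : j < p) :
    (tB p θ u v (j+1))^2 ≤ tA p θ u v (j+2) * tD p θ u v j := by
  have hK0 : (0:ℝ) < K := lt_of_lt_of_le one_pos hK
  by_cases h2 : j + 2 ≤ p
  · obtain ⟨q, rfl⟩ : ∃ q, p = j + 2 + q := ⟨p - (j+2), by omega⟩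
    have e1 : (j+2+q).choose (j+2) * (j+2) = (j+2+q).choose (j+1) * (q+1) := by
      have := Nat.choose_succ_right_eq (j+2+q) (j+1)
      simpa [show j+2+q - (j+1) = q+1 by omega] using this
    have e2 : (j+2+q).choose (j+1) * (j+1) = (j+2+q).choose j * (q+2) := by
      have := Nat.choose_succ_right_eq (j+2+q) j
      simpa [show j+2+q - j = q+2 by omega] using this
    have e1' : ((j+2+q).choose (j+2) : ℝ) * (j+2) = ((j+2+q).choose (j+1) : ℝ) * (q+1) := by
      exact_mod_cast congrArg (Nat.cast : ℕ → ℝ) e1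
    have e2' : ((j+2+q).choose (j+1) : ℝ) * (j+1) = ((j+2+q).choose j : ℝ) * (q+2) := by
      exact_mod_cast congrArg (Nat.cast : ℕ → ℝ) e2
    unfold tA tB tD
    rw [hθ, hθ, hθ]
    simp only [show j+1-1 = j by omega, show j+2+q-(j+1) = q+1 by omega,
      show j+2+q-(j+1)-1 = q by omega, show j+2-1 = j+1 by omega, show j+2-1-1 = j by omega,
      show j+2+q-(j+2) = q by omega, show j+2+q-j = q+2 by omega,
      show j+2+q-j-1 = q+1 by omega, show j+2+q-j-1-1 = q by omega]
    calc (((j+2+q).choose (j+1) : ℝ) * (c ^ (j + 1 + 1) * K ^ ((j+1) ^ 2)) * (↑(j+1)) * u ^ j *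
          ((↑(q+1):ℝ) * v ^ q))^2
        = (((j+2+q).choose (j+1) : ℝ) * (j+1)) * ((((j+2+q).choose (j+1) : ℝ)) * (j+1)) *
            ((q+1)^2 * c ^ (2*(j+2)) * K ^ (2*((j+1)^2)) * (u^j * v^q)^2) := by
          push_cast; ring
      _ = (((j+2+q).choose (j+1) : ℝ) * (j+1)) * ((((j+2+q).choose j : ℝ)) * (q+2)) *
            ((q+1)^2 * c ^ (2*(j+2)) * K ^ (2*((j+1)^2)) * (u^j * v^q)^2) := by rw [e2']
      _ ≤ (((j+2+q).choose (j+1) : ℝ) * (j+1)) * ((((j+2+q).choose j : ℝ)) * (q+2)) *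
            ((q+1)^2 * c ^ (2*(j+2)) * K ^ ((j+2)^2 + j^2) * (u^j * v^q)^2) := by
          have h1 : (0:ℝ) ≤ ((j+2+q).choose (j+1) : ℝ) * (j+1) := by positivity
          have h2 : (0:ℝ) ≤ ((j+2+q).choose j : ℝ) * (q+2) := by positivity
          have h3 : K ^ (2*((j+1)^2)) ≤ K ^ ((j+2)^2 + j^2) := pow_le_pow_right₀ hK (by nlinarith)
          gcongr
      _ = (((j+2+q).choose (j+1) : ℝ) * (q+1)) * ((((j+2+q).choose j : ℝ)) * (q+2)) *
            ((j+1)*(q+1) * c ^ (2*(j+2)) * K ^ ((j+2)^2 + j^2) * (u^j * v^q)^2) := by ring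
      _ = (((j+2+q).choose (j+2) : ℝ) * (j+2)) * ((((j+2+q).choose j : ℝ)) * (q+2)) *
            ((j+1)*(q+1) * c ^ (2*(j+2)) * K ^ ((j+2)^2 + j^2) * (u^j * v^q)^2) := by rw [e1']
      _ = ((j+2+q).choose (j+2) : ℝ) * (c ^ (j + 2 + 1) * K ^ ((j+2) ^ 2)) * (↑(j+2)) *
            ((↑(j+1):ℝ) * u ^ j) * v ^ q *
            (((j+2+q).choose j : ℝ) * (c ^ (j + 1) * K ^ (j ^ 2)) * u ^ j * (↑(q+2):ℝ) *
            ((↑(q+1):ℝ) * v ^ q)) := by push_cast; ring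
  · have hp1 : p = j + 1 := by omega
    have hb0 : tB p θ u v (j+1) = 0 := by
      unfold tB; rw [hp1]; simp
    rw [hb0]
    have := mul_nonneg (tA_nonneg hc hK hθ hu hv (p := p) (j+2)) (tD_nonneg hc hK hθ hu hv (p := p) j)
    simpa using this

lemma main_ineq (hc : 0 < c) (hK : 1 ≤ K) (hθ : ∀ i, θ i = c ^ (i + 1) * K ^ (i ^ 2))
    (hu : 0 ≤ u) (hv : 0 ≤ v) :
    (∑ i ∈ range (p+1), tB p θ u v i)^2 ≤
      (∑ i ∈ range (p+1), tA p θ u v i) * (∑ i ∈ range (p+1), tD p θ u v i) := by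
  have hB0 : tB p θ u v 0 = 0 := by unfold tB; simp
  have hA0 : tA p θ u v 0 = 0 := by unfold tA; simp
  have hA1 : tA p θ u v 1 = 0 := by unfold tA; simp
  have hAp1 : tA p θ u v (p+1) = 0 := by
    unfold tA; rw [Nat.choose_eq_zero_of_lt (by omega)]; simp
  have hDp : tD p θ u v p = 0 := by unfold tD; simp
  have hBsum : ∑ i ∈ range (p+1), tB p θ u v i = ∑ j ∈ range p, tB p θ u v (j+1) := by
    rw [Finset.sum_range_succ' (tB p θ u v) p, hB0, add_zero]
  have hAsum : ∑ i ∈ range (p+1), tA p θ u v i = ∑ j ∈ range p, tA p θ u v (j+2) := by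
    have h1 : ∑ i ∈ range (p+2), tA p θ u v i
        = ∑ i ∈ range (p+1), tA p θ u v i + tA p θ u v (p+1) := Finset.sum_range_succ _ _
    have h2 : ∑ i ∈ range (p+2), tA p θ u v i
        = ∑ j ∈ range (p+1), tA p θ u v (j+1) + tA p θ u v 0 := Finset.sum_range_succ' _ _
    have h3 : ∑ j ∈ range (p+1), tA p θ u v (j+1)
        = ∑ j ∈ range p, tA p θ u v (j+1+1) + tA p θ u v (0+1) :=
      Finset.sum_range_succ' (fun j => tA p θ u v (j+1)) p
    simp only [hA0, hA1, hAp1, add_zero, zero_add] at h1 h2 h3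
    rw [← h1, h2, h3]
  have hDsum : ∑ j ∈ range p, tD p θ u v j ≤ ∑ i ∈ range (p+1), tD p θ u v i := by
    rw [Finset.sum_range_succ, hDp, add_zero]
  set f : ℕ → ℝ := fun j => Real.sqrt (tA p θ u v (j+2)) with hf
  set g : ℕ → ℝ := fun j => Real.sqrt (tD p θ u v j) with hg
  have hfg : ∀ j ∈ range p, tB p θ u v (j+1) ≤ f j * g j := by
    intro j hj
    rw [hf, hg]
    have h1 := term_ineq hc hK hθ hu hv (Finset.mem_range.1 hj)
    have h2 := tB_nonneg hc hK hθ hu hv (p := p) (j+1)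
    calc tB p θ u v (j+1) = Real.sqrt ((tB p θ u v (j+1))^2) := by
          rw [Real.sqrt_sq h2]
      _ ≤ Real.sqrt (tA p θ u v (j+2) * tD p θ u v j) := Real.sqrt_le_sqrt h1
      _ = _ := Real.sqrt_mul (tA_nonneg hc hK hθ hu hv _) _
  calc (∑ i ∈ range (p+1), tB p θ u v i)^2
      = (∑ j ∈ range p, tB p θ u v (j+1))^2 := by rw [hBsum]
    _ ≤ (∑ j ∈ range p, f j * g j)^2 := by
        apply pow_le_pow_left₀ (Finset.sum_nonneg fun j _ => tB_nonneg hc hK hθ hu hv _)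
        exact Finset.sum_le_sum hfg
    _ ≤ (∑ j ∈ range p, (f j)^2) * (∑ j ∈ range p, (g j)^2) :=
        Finset.sum_mul_sq_le_sq_mul_sq _ _ _
    _ = (∑ j ∈ range p, tA p θ u v (j+2)) * (∑ j ∈ range p, tD p θ u v j) := by
        congr 1 <;> apply Finset.sum_congr rfl <;> intro j _
        · exact Real.sq_sqrt (tA_nonneg hc hK hθ hu hv _)
        · exact Real.sq_sqrt (tD_nonneg hc hK hθ hu hv _)
    _ ≤ _ := by
        rw [← hAsum]
        apply mul_le_mul_of_nonneg_left hDsum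
        exact Finset.sum_nonneg fun i _ => tA_nonneg hc hK hθ hu hv _

end main

section derivs

variable {p : ℕ} {θ : ℕ → ℝ} {H : ℝ → ℝ → ℝ}
variable (hH : ∀ u v : ℝ, H u v = ∑ i ∈ Finset.range (p + 1),
      (p.choose i : ℝ) * θ i * u ^ i * v ^ (p - i))

include hH

lemma deriv_x (y u' : ℝ) : deriv (fun x => H x y) u'
    = ∑ i ∈ range (p+1), ((p.choose i : ℝ) * θ i) * ((i:ℝ) * u' ^ (i-1)) * y ^ (p-i) := by
  have h : (fun x => H x y)
      = fun x => ∑ i ∈ range (p+1), ((p.choose i : ℝ) * θ i) * x ^ i * y ^ (p-i) :=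
    funext fun x => hH x y
  rw [h]
  exact (L1 (p+1) (fun i => (p.choose i : ℝ) * θ i) (fun i => y ^ (p-i)) (fun i => i) u').deriv

lemma hess_A (v u : ℝ) : deriv (deriv (fun x => H x v)) u = ∑ i ∈ range (p+1), tA p θ u v i := by
  have h : deriv (fun x => H x v)
      = fun x => ∑ i ∈ range (p+1), ((p.choose i : ℝ) * θ i * (i:ℝ)) * x ^ (i-1) * v ^ (p-i) := by
    funext x
    rw [deriv_x hH]
    exact Finset.sum_congr rfl fun i _ => by ring
  rw [h]
  simp only [tA]
  exact (L1 (p+1) (fun i => (p.choose i : ℝ) * θ i * (i:ℝ)) (fun i => v ^ (p-i))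
    (fun i => i-1) u).deriv

lemma hess_B (u v : ℝ) : deriv (fun y => deriv (fun x => H x y) u) v
    = ∑ i ∈ range (p+1), tB p θ u v i := by
  have h : (fun y => deriv (fun x => H x y) u)
      = fun y => ∑ i ∈ range (p+1), ((p.choose i : ℝ) * θ i * (i:ℝ) * u ^ (i-1)) * y ^ (p-i) := by
    funext y
    rw [deriv_x hH]
    exact Finset.sum_congr rfl fun i _ => by ring
  rw [h]
  simp only [tB]
  exact (L2 (p+1) (fun i => (p.choose i : ℝ) * θ i * (i:ℝ) * u ^ (i-1)) (fun i => p-i) v).deriv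

lemma hess_D (u v : ℝ) : deriv (deriv (fun y => H u y)) v = ∑ i ∈ range (p+1), tD p θ u v i := by
  have h0 : (fun y => H u y)
      = fun y => ∑ i ∈ range (p+1), ((p.choose i : ℝ) * θ i * u ^ i) * y ^ (p-i) :=
    funext fun y => hH u y
  have h : deriv (fun y => H u y)
      = fun y => ∑ i ∈ range (p+1), ((p.choose i : ℝ) * θ i * u ^ i * ((p-i:ℕ):ℝ)) * y ^ (p-i-1) := by
    funext y
    rw [h0, (L2 (p+1) (fun i => (p.choose i : ℝ) * θ i * u ^ i) (fun i => p-i) y).deriv]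
    exact Finset.sum_congr rfl fun i _ => by ring
  rw [h]
  simp only [tD]
  exact (L2 (p+1) (fun i => (p.choose i : ℝ) * θ i * u ^ i * ((p-i:ℕ):ℝ))
    (fun i => p-i-1) v).deriv

end derivs

lemma hasDerivAt_affine (q d t : ℝ) : HasDerivAt (fun t : ℝ => q + d * t) d t := by
  simpa using ((hasDerivAt_id t).const_mul d).const_add q

lemma segderiv1 (p : ℕ) (θ : ℕ → ℝ) (q1 q2 d1 d2 : ℝ) (t : ℝ) :
    HasDerivAt (fun t : ℝ => ∑ i ∈ range (p+1),
        (p.choose i : ℝ) * θ i * ((q1 + d1*t) ^ i * (q2 + d2*t) ^ (p-i)))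
      (∑ i ∈ range (p+1), (p.choose i : ℝ) * θ i *
        (((i:ℝ) * (q1+d1*t) ^ (i-1) * d1) * (q2+d2*t) ^ (p-i)
          + (q1+d1*t) ^ i * (((p-i : ℕ):ℝ) * (q2+d2*t) ^ (p-i-1) * d2))) t := by
  apply HasDerivAt.fun_sum
  intro i _
  exact (((hasDerivAt_affine q1 d1 t).pow i).mul
    ((hasDerivAt_affine q2 d2 t).pow (p-i))).const_mul _

lemma segderiv2 (p : ℕ) (θ : ℕ → ℝ) (q1 q2 d1 d2 : ℝ) (t : ℝ) :
    HasDerivAt (fun s : ℝ => ∑ i ∈ range (p+1), (p.choose i : ℝ) * θ i *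
        (((i:ℝ) * (q1+d1*s) ^ (i-1) * d1) * (q2+d2*s) ^ (p-i)
          + (q1+d1*s) ^ i * (((p-i : ℕ):ℝ) * (q2+d2*s) ^ (p-i-1) * d2)))
      ((∑ i ∈ range (p+1), tA p θ (q1+d1*t) (q2+d2*t) i) * d1^2
        + 2 * (∑ i ∈ range (p+1), tB p θ (q1+d1*t) (q2+d2*t) i) * d1 * d2
        + (∑ i ∈ range (p+1), tD p θ (q1+d1*t) (q2+d2*t) i) * d2^2) t := by
  have hX := hasDerivAt_affine q1 d1 t
  have hY := hasDerivAt_affine q2 d2 t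
  have h := HasDerivAt.fun_sum (u := range (p+1)) (x := t)
    (fun i (_ : i ∈ range (p+1)) =>
      (((((hX.pow (i-1)).const_mul (i:ℝ)).mul_const d1).mul (hY.pow (p-i))).add
        ((hX.pow i).mul (((hY.pow (p-i-1)).const_mul ((p-i : ℕ):ℝ)).mul_const d2))).const_mul
        ((p.choose i : ℝ) * θ i))
  simp only [Pi.pow_apply, Pi.mul_apply, Pi.add_apply] at h
  refine h.congr_deriv ?_
  symm
  simp only [Finset.sum_mul, Finset.mul_sum]
  rw [← Finset.sum_add_distrib, ← Finset.sum_add_distrib]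
  refine Finset.sum_congr rfl fun i _ => ?_
  unfold tA tB tD
  ring

theorem stmt18 (p : ℕ) (hp : 2 ≤ p) (c K : ℝ) (hc : 0 < c) (hK : 1 ≤ K)
    (θ : ℕ → ℝ) (hθ : ∀ i, θ i = c ^ (i + 1) * K ^ (i ^ 2))
    (H : ℝ → ℝ → ℝ)
    (hH : ∀ u v : ℝ, H u v = ∑ i ∈ Finset.range (p + 1),
      (p.choose i : ℝ) * θ i * u ^ i * v ^ (p - i)) :
    (∀ u v : ℝ, 0 ≤ u → 0 ≤ v →
      Matrix.PosSemidef
        !![deriv (deriv (fun x => H x v)) u, deriv (fun y => deriv (fun x => H x y) u) v;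
           deriv (fun y => deriv (fun x => H x y) u) v, deriv (deriv (fun y => H u y)) v]) ∧
    ConvexOn ℝ (Set.Ici (0:ℝ) ×ˢ Set.Ici (0:ℝ)) (fun q : ℝ × ℝ => H q.1 q.2) := by
  constructor
  · intro u v hu hv
    rw [hess_A hH, hess_B hH, hess_D hH]
    exact psd_2x2 (Finset.sum_nonneg fun i _ => tA_nonneg hc hK hθ hu hv _)
      (Finset.sum_nonneg fun i _ => tD_nonneg hc hK hθ hu hv _)
      (main_ineq hc hK hθ hu hv)
  · refine ⟨(convex_Ici 0).prod (convex_Ici 0), ?_⟩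
    rintro ⟨q1, q2⟩ hq ⟨r1, r2⟩ hr a b ha hb hab
    have hq1 : 0 ≤ q1 := hq.1
    have hq2 : 0 ≤ q2 := hq.2
    have hr1 : 0 ≤ r1 := hr.1
    have hr2 : 0 ≤ r2 := hr.2
    set d1 : ℝ := r1 - q1 with hd1
    set d2 : ℝ := r2 - q2 with hd2
    have hG1 : ∀ t : ℝ, HasDerivAt (fun t : ℝ => ∑ i ∈ range (p+1),
        (p.choose i : ℝ) * θ i * ((q1 + d1*t) ^ i * (q2 + d2*t) ^ (p-i)))
        (∑ i ∈ range (p+1), (p.choose i : ℝ) * θ i *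
          (((i:ℝ) * (q1+d1*t) ^ (i-1) * d1) * (q2+d2*t) ^ (p-i)
            + (q1+d1*t) ^ i * (((p-i : ℕ):ℝ) * (q2+d2*t) ^ (p-i-1) * d2))) t :=
      fun t => segderiv1 p θ q1 q2 d1 d2 t
    set G : ℝ → ℝ := fun t : ℝ => ∑ i ∈ range (p+1),
        (p.choose i : ℝ) * θ i * ((q1 + d1*t) ^ i * (q2 + d2*t) ^ (p-i)) with hGdef
    set G1 : ℝ → ℝ := fun t : ℝ => ∑ i ∈ range (p+1), (p.choose i : ℝ) * θ i *
          (((i:ℝ) * (q1+d1*t) ^ (i-1) * d1) * (q2+d2*t) ^ (p-i)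
            + (q1+d1*t) ^ i * (((p-i : ℕ):ℝ) * (q2+d2*t) ^ (p-i-1) * d2)) with hG1def
    have hdiff : Differentiable ℝ G := fun t => (hG1 t).differentiableAt
    have hderivG : deriv G = G1 := funext fun t => (hG1 t).deriv
    have hG2 : ∀ t : ℝ, HasDerivAt G1
        ((∑ i ∈ range (p+1), tA p θ (q1+d1*t) (q2+d2*t) i) * d1^2
          + 2 * (∑ i ∈ range (p+1), tB p θ (q1+d1*t) (q2+d2*t) i) * d1 * d2
          + (∑ i ∈ range (p+1), tD p θ (q1+d1*t) (q2+d2*t) i) * d2^2) t :=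
      fun t => segderiv2 p θ q1 q2 d1 d2 t
    have hconv : ConvexOn ℝ (Set.Icc (0:ℝ) 1) G := by
      apply convexOn_of_deriv2_nonneg (convex_Icc 0 1) hdiff.continuous.continuousOn
        hdiff.differentiableOn
      · rw [hderivG]
        exact fun t _ => (hG2 t).differentiableAt.differentiableWithinAt
      · intro t ht
        rw [interior_Icc] at ht
        have h2 : deriv^[2] G t = (∑ i ∈ range (p+1), tA p θ (q1+d1*t) (q2+d2*t) i) * d1^2
            + 2 * (∑ i ∈ range (p+1), tB p θ (q1+d1*t) (q2+d2*t) i) * d1 * d2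
            + (∑ i ∈ range (p+1), tD p θ (q1+d1*t) (q2+d2*t) i) * d2^2 := by
          show deriv (deriv G) t = _
          rw [hderivG]
          exact (hG2 t).deriv
        rw [h2]
        have hX : 0 ≤ q1 + d1*t := by
          rw [hd1]; nlinarith [mul_nonneg hq1 (sub_nonneg.2 ht.2.le), mul_nonneg hr1 ht.1.le]
        have hY : 0 ≤ q2 + d2*t := by
          rw [hd2]; nlinarith [mul_nonneg hq2 (sub_nonneg.2 ht.2.le), mul_nonneg hr2 ht.1.le]
        exact quad_nonneg (Finset.sum_nonneg fun i _ => tA_nonneg hc hK hθ hX hY _)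
          (Finset.sum_nonneg fun i _ => tD_nonneg hc hK hθ hX hY _)
          (main_ineq hc hK hθ hX hY) d1 d2
    have h0 : (0:ℝ) ∈ Set.Icc (0:ℝ) 1 := by norm_num
    have h1 : (1:ℝ) ∈ Set.Icc (0:ℝ) 1 := by norm_num
    have key := hconv.2 h0 h1 ha hb hab
    simp only [smul_eq_mul, mul_zero, mul_one, zero_add] at key
    have e0 : G 0 = H q1 q2 := by
      rw [hGdef, hH q1 q2]
      refine Finset.sum_congr rfl fun i _ => ?_
      rw [mul_zero, add_zero, mul_zero, add_zero, ← mul_assoc]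
    have e1 : G 1 = H r1 r2 := by
      rw [hGdef, hH r1 r2]
      refine Finset.sum_congr rfl fun i _ => ?_
      rw [show q1 + d1*1 = r1 by rw [hd1]; ring, show q2 + d2*1 = r2 by rw [hd2]; ring,
        ← mul_assoc]
    have eb : G b = H (a*q1 + b*r1) (a*q2 + b*r2) := by
      rw [hGdef, hH]
      refine Finset.sum_congr rfl fun i _ => ?_
      rw [show q1 + d1*b = a*q1 + b*r1 by rw [hd1]; linear_combination (-q1)*hab,
        show q2 + d2*b = a*q2 + b*r2 by rw [hd2]; linear_combination (-q2)*hab,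
        ← mul_assoc]
    show H (a*q1 + b*r1) (a*q2 + b*r2) ≤ a * H q1 q2 + b * H r1 r2
    rw [← e0, ← e1, ← eb]
    exact key
end
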